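/- arXiv:2004.01700 — 2 statements merged into one kernel-verified Lean document; each statement's English description precedes it below -/
import Mathlib

section
/- For every real ξ with 0 ≤ ξ < 1, the integral ∫₀^π dψ / (1 − ξ cos ψ)^{3/2} equals (π/(1+ξ)^{3/2}) · ₂F₁(1/2, 3/2; 1; 2ξ/(1+ξ)). -/
open Real intervalIntegral

/-- Pochhammer symbol `(a)_n` for real `a`. -/
noncomputable def poch (a : ℝ) (n : ℕ) : ℝ := ∏ i ∈ Finset.range n, (a + i)

/-- Gauss hypergeometric function `₂F₁(a,b;c;x)` as a power series (for `|x| < 1`). -/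
noncomputable def hyp2F1 (a b c x : ℝ) : ℝ :=
  ∑' n : ℕ, (poch a n * poch b n) / (poch c n * n.factorial) * x ^ n

open Set Filter MeasureTheory

lemma poch_succ (a : ℝ) (n : ℕ) : poch a (n+1) = poch a n * (a + n) :=
  Finset.prod_range_succ _ _

lemma poch_zero (a : ℝ) : poch a 0 = 1 := rfl

lemma poch_one_eq (n : ℕ) : poch 1 n = n.factorial := by
  induction n with
  | zero => simp [poch]
  | succ k ih => rw [poch_succ, ih]; push_cast [Nat.factorial_succ]; ring

lemma poch_nonneg {a : ℝ} (ha : 0 ≤ a) (n : ℕ) : 0 ≤ poch a n :=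
  Finset.prod_nonneg fun i _ => by positivity

lemma poch_32_le (n : ℕ) : poch (3/2) n ≤ (n+1) * n.factorial := by
  induction n with
  | zero => norm_num [poch]
  | succ k ih =>
    rw [poch_succ]
    have h1 : (3/2 : ℝ) + k ≤ k + 2 := by linarith
    have h2 : (0:ℝ) ≤ poch (3/2) k := poch_nonneg (by norm_num) k
    calc poch (3/2) k * (3/2 + k) ≤ ((k+1) * k.factorial) * (k + 2) := by
          apply mul_le_mul ih h1 (by positivity) (by positivity)
      _ = (↑(k+1)+1) * (k+1).factorial := by push_cast [Nat.factorial_succ]; ring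

lemma hasDerivAt_aux (c : ℝ) {t : ℝ} (ht : t < 1) :
    HasDerivAt (fun s : ℝ => (1 - s) ^ c) (-(c * (1 - t) ^ (c - 1))) t := by
  have h1 : HasDerivAt (fun s : ℝ => 1 - s) (-1) t := by
    simpa using (hasDerivAt_id t).const_sub 1
  have h2 : HasDerivAt (fun y : ℝ => y ^ c) (c * (1 - t) ^ (c - 1)) (1 - t) :=
    Real.hasDerivAt_rpow_const (Or.inl (by linarith))
  have h3 := h2.comp t h1
  rw [show (c * (1 - t) ^ (c - 1)) * -1 = -(c * (1 - t) ^ (c - 1)) by ring] at h3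
  exact h3

lemma contDiffOn_aux (n : ℕ) {x : ℝ} (hx : x < 1) :
    ContDiffOn ℝ n (fun t : ℝ => (1 - t) ^ (-(3/2) : ℝ)) (Icc 0 x) := by
  intro t ht
  have h1t : (1:ℝ) - t ≠ 0 := by
    have := ht.2; intro h; nlinarith
  exact ((Real.contDiffAt_rpow_const_of_ne h1t).comp t
    ((contDiff_const.sub contDiff_id).contDiffAt)).contDiffWithinAt

lemma iter_deriv_aux {x : ℝ} (hx0 : 0 < x) (hx1 : x < 1) (n : ℕ) :
    ∀ t ∈ Icc (0:ℝ) x, iteratedDerivWithin n (fun t : ℝ => (1 - t) ^ (-(3/2) : ℝ)) (Icc 0 x) t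
      = poch (3/2) n * (1 - t) ^ (-(3/2) - n : ℝ) := by
  have hu : UniqueDiffOn ℝ (Icc (0:ℝ) x) := uniqueDiffOn_Icc hx0
  induction n with
  | zero => intro t ht; simp [poch]
  | succ k ih =>
    intro t ht
    rw [iteratedDerivWithin_succ]
    rw [derivWithin_congr ih (ih t ht)]
    have ht1 : t < 1 := lt_of_le_of_lt ht.2 hx1
    have hd : HasDerivAt (fun t : ℝ => poch (3/2) k * (1-t) ^ (-(3/2) - (k:ℝ)))
        (poch (3/2) k * -((-(3/2) - (k:ℝ)) * (1-t) ^ ((-(3/2) - (k:ℝ)) - 1))) t :=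
      (hasDerivAt_aux _ ht1).const_mul _
    rw [hd.hasDerivWithinAt.derivWithin (hu t ht), poch_succ]
    have he : (-(3/2) - (k:ℝ)) - 1 = -(3/2) - ((k+1 : ℕ) : ℝ) := by push_cast; ring
    rw [he]; ring

lemma summable_binom {x : ℝ} (hx0 : 0 ≤ x) (hx1 : x < 1) :
    Summable (fun n : ℕ => poch (3/2) n / n.factorial * x ^ n) := by
  have hb : Summable (fun n : ℕ => ((n:ℝ) + 1) * x ^ n) := by
    have h1 : Summable (fun n : ℕ => (n:ℝ)^1 * x ^ n) :=
      summable_pow_mul_geometric_of_norm_lt_one 1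
        (by rwa [Real.norm_eq_abs, abs_of_nonneg hx0])
    have h0 : Summable (fun n : ℕ => x ^ n) := summable_geometric_of_lt_one hx0 hx1
    simpa [pow_one, add_mul] using h1.add h0
  refine Summable.of_nonneg_of_le (fun n => mul_nonneg (div_nonneg (poch_nonneg (by norm_num) n) (by positivity)) (pow_nonneg hx0 n)) (fun n => ?_) hb
  have h := poch_32_le n
  have hf : (0:ℝ) < n.factorial := by positivity
  rw [div_mul_eq_mul_div, div_le_iff₀ hf]
  calc poch (3/2) n * x ^ n ≤ ((n+1) * n.factorial) * x ^ n := by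
        apply mul_le_mul_of_nonneg_right h (by positivity)
    _ = ((n:ℝ)+1) * x ^ n * n.factorial := by ring

lemma hasSum_binom {x : ℝ} (hx0 : 0 ≤ x) (hx1 : x < 1) :
    HasSum (fun n : ℕ => poch (3/2) n / n.factorial * x ^ n) ((1 - x) ^ (-(3/2) : ℝ)) := by
  rcases eq_or_lt_of_le hx0 with h | hx0'
  · have : ∀ n : ℕ, n ≠ 0 → poch (3/2) n / n.factorial * x ^ n = 0 := by
      intro n hn
      rw [← h, zero_pow hn, mul_zero]
    have h0 := hasSum_single (f := fun n : ℕ => poch (3/2) n / n.factorial * x ^ n) 0 this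
    simpa [← h, poch] using h0
  set f : ℝ → ℝ := fun t => (1 - t) ^ (-(3/2) : ℝ) with hf
  set t : ℕ → ℝ := fun n => poch (3/2) n / n.factorial * x ^ n with hT
  have hsum : Summable t := summable_binom hx0 hx1
  -- partial sums converge to f x
  have hx1' : (0:ℝ) < 1 - x := by linarith
  set C : ℝ := (1 - x) ^ (-(5/2) : ℝ) with hC
  have hCpos : 0 < C := Real.rpow_pos_of_pos hx1' _
  have key : ∀ n : ℕ, |f x - ∑ k ∈ Finset.range (n+1), t k| ≤
      C * x * (((n:ℝ)+2) * ((n:ℝ)+1) * x ^ n) := by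
    intro n
    have hIcc : uIcc (0:ℝ) x = Icc 0 x := uIcc_of_le hx0
    have hIoo : uIoo (0:ℝ) x = Ioo 0 x := uIoo_of_le hx0
    obtain ⟨x', hx', heq⟩ := taylor_mean_remainder_cauchy (f := f) (x₀ := 0) (x := x) (n := n) hx0'.ne
      (by rw [hIcc]; exact contDiffOn_aux n hx1) (by
        rw [hIcc, hIoo]
        refine DifferentiableOn.congr (f := fun t : ℝ => poch (3/2) n * (1-t) ^ (-(3/2) - n : ℝ))
          ?_ (fun y hy => iter_deriv_aux hx0' hx1 n y (Ioo_subset_Icc_self hy))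
        intro y hy
        have hy1 : y < 1 := lt_trans hy.2 hx1
        exact ((hasDerivAt_aux _ hy1).const_mul (poch (3/2) n)).differentiableAt.differentiableWithinAt)
    have hpoly : taylorWithinEval f n (Icc 0 x) 0 x = ∑ k ∈ Finset.range (n+1), t k := by
      rw [taylor_within_apply]
      apply Finset.sum_congr rfl
      intro k hk
      rw [iter_deriv_aux hx0' hx1 k 0 (by constructor <;> norm_num [le_of_lt hx0'])]
      simp only [sub_zero, Real.one_rpow, smul_eq_mul, hT]
      ring
    rw [hIcc] at heq
    rw [hIoo] at hx'
    rw [hpoly] at heq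
    rw [heq]
    rw [iter_deriv_aux hx0' hx1 (n+1) x' (Ioo_subset_Icc_self hx')]
    -- now bound
    obtain ⟨hx'0, hx'x⟩ := hx'
    set A : ℝ := 1 - x' with hA
    have hApos : 0 < A := by simp only [hA]; linarith
    have hAx : 1 - x ≤ A := by simp only [hA]; linarith
    have hsplit : A ^ (-(3/2) - ((n+1:ℕ):ℝ)) = A ^ (-(5/2):ℝ) * (A⁻¹) ^ (n:ℕ) := by
      rw [inv_pow, ← Real.rpow_natCast A n, ← Real.rpow_neg (le_of_lt hApos),
        ← Real.rpow_add hApos]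
      congr 1; push_cast; ring
    rw [hsplit]
    have hfrac : (x - x') / A ≤ x := by
      rw [div_le_iff₀ hApos]
      have : x * x' ≤ x' := by nlinarith
      simp only [hA]; nlinarith
    have hfrac0 : 0 ≤ (x - x') / A := div_nonneg (by linarith) (le_of_lt hApos)
    have hACle : A ^ (-(5/2):ℝ) ≤ C := by
      rw [hC, Real.rpow_neg (le_of_lt hApos), Real.rpow_neg (le_of_lt hx1')]
      apply inv_anti₀ (Real.rpow_pos_of_pos hx1' _)
      exact Real.rpow_le_rpow (le_of_lt hx1') hAx (by norm_num)
    have hterm : |poch (3/2) (n+1) * (A ^ (-(5/2):ℝ) * (A⁻¹) ^ n) * (x - x') ^ n / (n.factorial : ℝ) * (x - 0)|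
        ≤ C * x * (((n:ℝ)+2) * ((n:ℝ)+1) * x ^ n) := by
      have hp0 : 0 ≤ poch (3/2) (n+1) := poch_nonneg (by norm_num) _
      have hxx' : (0:ℝ) ≤ x - x' := by linarith
      have hfn : (0:ℝ) < (n.factorial : ℝ) := by positivity
      have hE : poch (3/2) (n+1) * (A ^ (-(5/2):ℝ) * (A⁻¹) ^ n) * (x - x') ^ n / (n.factorial : ℝ) * (x - 0)
          = poch (3/2) (n+1) / (n.factorial : ℝ) * (A ^ (-(5/2):ℝ)) * ((x - x')/A) ^ n * x := by
        have hAn : (A:ℝ) ≠ 0 := ne_of_gt hApos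
        have hfn' : (n.factorial:ℝ) ≠ 0 := ne_of_gt hfn
        rw [sub_zero, div_pow, inv_pow]
        ring
      have hrpos : (0:ℝ) ≤ A ^ (-(5/2):ℝ) := le_of_lt (Real.rpow_pos_of_pos hApos _)
      have habs : |poch (3/2) (n+1) * (A ^ (-(5/2):ℝ) * (A⁻¹) ^ n) * (x - x') ^ n / (n.factorial : ℝ) * (x - 0)|
          = poch (3/2) (n+1) / (n.factorial : ℝ) * (A ^ (-(5/2):ℝ)) * ((x - x')/A) ^ n * x := by
        rw [hE, abs_of_nonneg]
        apply mul_nonneg (mul_nonneg (mul_nonneg (div_nonneg hp0 (le_of_lt hfn)) hrpos)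
          (pow_nonneg hfrac0 n)) hx0
      rw [habs]
      have h1 : ((x - x')/A) ^ n ≤ x ^ n := pow_le_pow_left₀ hfrac0 hfrac n
      have h2 : poch (3/2) (n+1) / (n.factorial : ℝ) ≤ ((n:ℝ)+2) * ((n:ℝ)+1) := by
        rw [div_le_iff₀ (by positivity)]
        calc poch (3/2) (n+1) ≤ ((n+1:ℕ)+1) * (n+1).factorial := poch_32_le (n+1)
          _ = ((n:ℝ)+2) * ((n:ℝ)+1) * n.factorial := by
              push_cast [Nat.factorial_succ]; ring
      calc poch (3/2) (n+1) / (n.factorial : ℝ) * (A ^ (-(5/2):ℝ)) * ((x - x')/A) ^ n * x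
          ≤ (((n:ℝ)+2) * ((n:ℝ)+1)) * C * x ^ n * x := by
            apply mul_le_mul_of_nonneg_right _ (le_of_lt hx0')
            apply mul_le_mul _ h1 (by positivity) (by positivity)
            apply mul_le_mul h2 hACle (by positivity) (by positivity)
        _ = C * x * (((n:ℝ)+2) * ((n:ℝ)+1) * x ^ n) := by ring
    exact hterm
  -- deduce tendsto
  have hb : Tendsto (fun n : ℕ => C * x * (((n:ℝ)+2) * ((n:ℝ)+1) * x ^ n)) atTop (nhds 0) := by
    have h2 : Tendsto (fun n : ℕ => (n:ℝ)^2 * x ^ n) atTop (nhds 0) :=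
      (summable_pow_mul_geometric_of_norm_lt_one (R := ℝ) 2 (by rwa [Real.norm_eq_abs, abs_of_nonneg hx0])).tendsto_atTop_zero
    have h1 : Tendsto (fun n : ℕ => (n:ℝ)^1 * x ^ n) atTop (nhds 0) :=
      (summable_pow_mul_geometric_of_norm_lt_one (R := ℝ) 1 (by rwa [Real.norm_eq_abs, abs_of_nonneg hx0])).tendsto_atTop_zero
    have h0 : Tendsto (fun n : ℕ => x ^ n) atTop (nhds 0) :=
      tendsto_pow_atTop_nhds_zero_of_lt_one hx0 hx1
    have hs : Tendsto (fun n : ℕ => (n:ℝ)^2 * x ^ n + (3 * ((n:ℝ)^1 * x^n) + 2 * x^n)) atTop (nhds 0) := by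
      have := h2.add ((h1.const_mul 3).add (h0.const_mul 2))
      simpa using this
    have hs2 := hs.const_mul (C * x)
    rw [mul_zero] at hs2
    exact hs2.congr (fun n => by ring)
  have hten : Tendsto (fun n : ℕ => ∑ k ∈ Finset.range (n+1), t k) atTop (nhds (f x)) := by
    rw [← tendsto_sub_nhds_zero_iff]
    apply squeeze_zero_norm (fun n => ?_) hb
    rw [Real.norm_eq_abs, abs_sub_comm]
    exact key n
  have hten' : Tendsto (fun n : ℕ => ∑ k ∈ Finset.range n, t k) atTop (nhds (f x)) :=
    (tendsto_add_atTop_iff_nat 1).mp hten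
  have := hsum.hasSum.tendsto_sum_nat
  have heqv : (∑' n, t n) = f x := tendsto_nhds_unique this hten'
  have h := hsum.hasSum
  rw [heqv] at h
  exact h

lemma prod_wallis (n : ℕ) :
    ∏ i ∈ Finset.range n, ((2*(i:ℝ)+1)/(2*(i:ℝ)+2)) = poch (1/2) n / n.factorial := by
  induction n with
  | zero => simp [poch]
  | succ k ih =>
    rw [Finset.prod_range_succ, ih, poch_succ]
    have h1 : ((k+1).factorial : ℝ) = (k.factorial : ℝ) * (k+1) := by
      push_cast [Nat.factorial_succ]; ring
    rw [h1]
    have h2 : (k.factorial : ℝ) ≠ 0 := by positivity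
    field_simp
    ring

lemma integral_half_pow (n : ℕ) :
    ∫ ψ in (0:ℝ)..π, ((1 + Real.cos ψ)/2) ^ n = π * (poch (1/2) n / n.factorial) := by
  have step1 : ∫ ψ in (0:ℝ)..π, ((1 + Real.cos ψ)/2) ^ n
      = ∫ ψ in (0:ℝ)..π, (fun θ : ℝ => Real.cos θ ^ (2*n)) (ψ/2) := by
    apply intervalIntegral.integral_congr
    intro ψ _
    simp only
    rw [pow_mul, Real.cos_sq]
    have h2 : 2 * (ψ/2) = ψ := by ring
    rw [h2]
    congr 1
    ring
  rw [step1, intervalIntegral.integral_comp_div (c := 2) (by norm_num)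
    (f := fun θ : ℝ => Real.cos θ ^ (2*n))]
  norm_num
  have step2 : ∫ θ in (0:ℝ)..(π/2), Real.cos θ ^ (2*n)
      = ∫ θ in (0:ℝ)..(π/2), Real.sin θ ^ (2*n) := by
    have := intervalIntegral.integral_comp_sub_left (a := (0:ℝ)) (b := π/2)
      (fun θ : ℝ => Real.sin θ ^ (2*n)) (π/2)
    simp only [sub_zero, sub_self] at this
    rw [← this]
    apply intervalIntegral.integral_congr
    intro ψ _
    simp [Real.sin_pi_div_two_sub]
  rw [step2]
  have step3 : (2:ℝ) * ∫ θ in (0:ℝ)..(π/2), Real.sin θ ^ (2*n)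
      = ∫ θ in (0:ℝ)..π, Real.sin θ ^ (2*n) := by
    have hsplit : ∫ θ in (0:ℝ)..π, Real.sin θ ^ (2*n)
        = (∫ θ in (0:ℝ)..(π/2), Real.sin θ ^ (2*n)) + ∫ θ in (π/2)..π, Real.sin θ ^ (2*n) := by
      rw [intervalIntegral.integral_add_adjacent_intervals] <;>
        exact (Continuous.pow Real.continuous_sin _).intervalIntegrable _ _
    have hsym : ∫ θ in (π/2)..π, Real.sin θ ^ (2*n)
        = ∫ θ in (0:ℝ)..(π/2), Real.sin θ ^ (2*n) := by
      have := intervalIntegral.integral_comp_sub_left (a := (π/2:ℝ)) (b := π)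
        (fun θ : ℝ => Real.sin θ ^ (2*n)) π
      simp only [sub_self] at this
      have hpi : π - π/2 = π/2 := by ring
      rw [hpi] at this
      rw [← this]
      apply intervalIntegral.integral_congr
      intro ψ _
      simp [Real.sin_pi_sub]
    rw [hsplit, hsym]; ring
  rw [step3, integral_sin_pow_even, prod_wallis]

lemma poch_12_le (n : ℕ) : poch (1/2) n ≤ n.factorial := by
  induction n with
  | zero => norm_num [poch]
  | succ k ih =>
    rw [poch_succ]
    have h2 : (0:ℝ) ≤ poch (1/2) k := poch_nonneg (by norm_num) k
    calc poch (1/2) k * (1/2 + k) ≤ (k.factorial : ℝ) * (k+1) := by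
          apply mul_le_mul ih (by linarith) (by positivity) (by positivity)
      _ = ((k+1).factorial : ℝ) := by push_cast [Nat.factorial_succ]; ring


theorem integral_I1_eq_hyp (ξ : ℝ) (h0 : 0 ≤ ξ) (h1 : ξ < 1) :
    ∫ ψ in (0:ℝ)..π, (1 - ξ * Real.cos ψ) ^ (-(3/2) : ℝ) =
      π / (1 + ξ) ^ ((3/2) : ℝ) * hyp2F1 (1/2) (3/2) 1 (2 * ξ / (1 + ξ)) := by
  have hξ1 : (0:ℝ) < 1 + ξ := by linarith
  set m : ℝ := 2 * ξ / (1 + ξ) with hm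
  have hm0 : 0 ≤ m := by positivity
  have hm1 : m < 1 := by
    rw [hm, div_lt_one hξ1]; linarith
  set h : ℝ → ℝ := fun ψ => (1 + Real.cos ψ) / 2 with hh
  have hh0 : ∀ ψ, 0 ≤ h ψ := fun ψ => by
    have := Real.neg_one_le_cos ψ; simp only [hh]; linarith
  have hh1 : ∀ ψ, h ψ ≤ 1 := fun ψ => by
    have := Real.cos_le_one ψ; simp only [hh]; linarith
  have hu0 : ∀ ψ, 0 ≤ m * h ψ := fun ψ => mul_nonneg hm0 (hh0 ψ)
  have hu1 : ∀ ψ, m * h ψ < 1 := fun ψ =>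
    lt_of_le_of_lt (mul_le_of_le_one_right hm0 (hh1 ψ)) hm1
  -- Step A : factor out (1+ξ)
  have hfac : ∀ ψ, (1 - ξ * Real.cos ψ) ^ (-(3/2) : ℝ)
      = (1 + ξ) ^ (-(3/2) : ℝ) * (1 - m * h ψ) ^ (-(3/2) : ℝ) := by
    intro ψ
    have hprod : 1 - ξ * Real.cos ψ = (1 + ξ) * (1 - m * h ψ) := by
      simp only [hm, hh]
      field_simp
      ring
    rw [hprod, Real.mul_rpow (le_of_lt hξ1) (by nlinarith [hu1 ψ])]
  rw [intervalIntegral.integral_congr (fun ψ _ => hfac ψ), intervalIntegral.integral_const_mul]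
  -- Step B/C : series expansion and swap
  set F : ℕ → ℝ → ℝ := fun n ψ => poch (3/2) n / n.factorial * (m * h ψ) ^ n with hF
  have hFcont : ∀ n, Continuous (F n) := by
    intro n
    apply Continuous.mul continuous_const
    apply Continuous.pow
    exact continuous_const.mul (by fun_prop)
  have hFnonneg : ∀ n ψ, 0 ≤ F n ψ := fun n ψ =>
    mul_nonneg (div_nonneg (poch_nonneg (by norm_num) n) (by positivity))
      (pow_nonneg (hu0 ψ) n)
  have hval : ∀ n, (∫ ψ in (0:ℝ)..π, F n ψ)
      = π * (poch (1/2) n * poch (3/2) n / ((n.factorial : ℝ) * n.factorial) * m ^ n) := by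
    intro n
    have heq : ∀ ψ ∈ uIcc (0:ℝ) π, F n ψ
        = (poch (3/2) n / n.factorial * m ^ n) * ((1 + Real.cos ψ)/2) ^ n := by
      intro ψ _
      simp only [hF, hh, mul_pow]
      ring
    rw [intervalIntegral.integral_congr heq, intervalIntegral.integral_const_mul,
      integral_half_pow]
    ring
  have hGsum : Summable (fun n : ℕ =>
      π * (poch (1/2) n * poch (3/2) n / ((n.factorial : ℝ) * n.factorial) * m ^ n)) := by
    have hb : Summable (fun n : ℕ => π * (((n:ℝ) + 1) * m ^ n)) := by
      apply Summable.mul_left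
      have h1 : Summable (fun n : ℕ => (n:ℝ)^1 * m ^ n) :=
        summable_pow_mul_geometric_of_norm_lt_one 1
          (by rwa [Real.norm_eq_abs, abs_of_nonneg hm0])
      have h2 : Summable (fun n : ℕ => m ^ n) := summable_geometric_of_lt_one hm0 hm1
      simpa [pow_one, add_mul] using h1.add h2
    refine Summable.of_nonneg_of_le (fun n => ?_) (fun n => ?_) hb
    · have := poch_nonneg (show (0:ℝ) ≤ 1/2 by norm_num) n
      have := poch_nonneg (show (0:ℝ) ≤ 3/2 by norm_num) n
      have : (0:ℝ) < π := Real.pi_pos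
      positivity
    · apply mul_le_mul_of_nonneg_left _ (le_of_lt Real.pi_pos)
      apply mul_le_mul_of_nonneg_right _ (pow_nonneg hm0 n)
      rw [div_le_iff₀ (by positivity)]
      calc poch (1/2) n * poch (3/2) n ≤ (n.factorial : ℝ) * ((n+1) * n.factorial) := by
            apply mul_le_mul (poch_12_le n) (poch_32_le n)
              (poch_nonneg (by norm_num) n) (by positivity)
        _ = ((n:ℝ)+1) * ((n.factorial : ℝ) * n.factorial) := by ring
  have hswap : HasSum (fun n : ℕ => ∫ ψ in Set.Ioc (0:ℝ) π, F n ψ)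
      (∫ ψ in Set.Ioc (0:ℝ) π, ∑' n : ℕ, F n ψ) := by
    apply MeasureTheory.hasSum_integral_of_summable_integral_norm
    · intro n
      exact ((hFcont n).integrableOn_Ioc)
    · have : ∀ n : ℕ, (∫ ψ in Set.Ioc (0:ℝ) π, ‖F n ψ‖)
          = π * (poch (1/2) n * poch (3/2) n / ((n.factorial : ℝ) * n.factorial) * m ^ n) := by
        intro n
        have h1 : (fun ψ => ‖F n ψ‖) = F n := by
          funext ψ; rw [Real.norm_eq_abs, abs_of_nonneg (hFnonneg n ψ)]
        rw [h1, ← intervalIntegral.integral_of_le Real.pi_pos.le, hval n]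
      rw [funext this]
      exact hGsum
  have hptwise : ∀ ψ, (∑' n : ℕ, F n ψ) = (1 - m * h ψ) ^ (-(3/2) : ℝ) := fun ψ =>
    (hasSum_binom (hu0 ψ) (hu1 ψ)).tsum_eq
  have hint : (∫ ψ in (0:ℝ)..π, (1 - m * h ψ) ^ (-(3/2) : ℝ))
      = ∑' n : ℕ, π * (poch (1/2) n * poch (3/2) n / ((n.factorial : ℝ) * n.factorial) * m ^ n) := by
    rw [intervalIntegral.integral_of_le Real.pi_pos.le]
    have := hswap.tsum_eq
    rw [← funext hptwise] at *
    rw [← this]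
    apply tsum_congr
    intro n
    rw [← intervalIntegral.integral_of_le Real.pi_pos.le, hval n]
  rw [hint]
  -- Step D : match constants
  rw [tsum_mul_left]
  have hhyp : hyp2F1 (1/2) (3/2) 1 m
      = ∑' n : ℕ, poch (1/2) n * poch (3/2) n / ((n.factorial : ℝ) * n.factorial) * m ^ n := by
    unfold hyp2F1
    apply tsum_congr
    intro n
    rw [poch_one_eq]
  rw [hhyp.symm]
  rw [Real.rpow_neg (le_of_lt hξ1)]
  field_simp
end

section
/- Let a < b be reals, ρ ≠ −1 a real number with ρ > −1, and f : [a,b] → ℝ continuous, with 0 < a. Then for all x ∈ [a,b], the iterated integral ∫_a^x τ₁^ρ (∫_a^{τ₁} τ^ρ f(τ) dτ) dτ₁ equals (1/(ρ+1)) ∫_a^x (x^{ρ+1} − τ^{ρ+1}) τ^ρ f(τ) dτ. -/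
open Real

theorem dirichlet_technique (a b ρ : ℝ) (hab : a < b) (ha : 0 < a)
    (hρ : -1 < ρ) (hρ' : ρ ≠ -1) (f : ℝ → ℝ) (hf : ContinuousOn f (Set.Icc a b)) :
    ∀ x ∈ Set.Icc a b,
      (∫ τ₁ in a..x, τ₁ ^ ρ * ∫ τ in a..τ₁, τ ^ ρ * f τ) =
        (1 / (ρ + 1)) * ∫ τ in a..x, (x ^ (ρ + 1) - τ ^ (ρ + 1)) * τ ^ ρ * f τ := by
  rintro x ⟨hax, hxb⟩
  have hρ1 : ρ + 1 ≠ 0 := by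
    intro h; apply hρ'; linarith
  -- extend f to a continuous function g on ℝ
  set g : ℝ → ℝ := fun t => f (max a (min t b)) with hgdef
  have hmem : ∀ t : ℝ, max a (min t b) ∈ Set.Icc a b := by
    intro t
    exact ⟨le_max_left _ _, max_le hab.le (min_le_right _ _)⟩
  have hgc : Continuous g := by
    apply hf.comp_continuous (continuous_const.max (continuous_id.min continuous_const)) hmem
  have hgeq : ∀ t ∈ Set.Icc a b, g t = f t := by
    rintro t ⟨h1, h2⟩
    simp [hgdef, min_eq_left h2, max_eq_left, max_eq_right h1]
  -- the kernel h
  set h : ℝ → ℝ := fun τ => τ ^ ρ * g τ with hhdef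
  have hhc : ∀ t ∈ Set.Ioi (0:ℝ), ContinuousAt h t := by
    intro t ht
    exact (Real.continuousAt_rpow_const t ρ (Or.inl ht.ne')).mul hgc.continuousAt
  have hhint : ∀ t₁ t₂ : ℝ, 0 < t₁ → 0 < t₂ → IntervalIntegrable h MeasureTheory.volume t₁ t₂ := by
    intro t₁ t₂ h₁ h₂
    apply ContinuousOn.intervalIntegrable
    intro t ht
    have ht0 : 0 < t := lt_of_lt_of_le (lt_min h₁ h₂) ht.1
    exact (hhc t ht0).continuousWithinAt
  have hpos : ∀ t ∈ Set.uIcc a x, 0 < t := by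
    intro t ht
    rw [Set.uIcc_of_le hax] at ht
    exact lt_of_lt_of_le ha ht.1
  set u : ℝ → ℝ := fun t => ∫ τ in a..t, h τ with hudef
  set v : ℝ → ℝ := fun t => (t ^ (ρ + 1) - x ^ (ρ + 1)) / (ρ + 1) with hvdef
  have hu : ∀ t ∈ Set.uIcc a x, HasDerivAt u (h t) t := by
    intro t ht
    exact intervalIntegral.integral_hasDerivAt_right (hhint a t ha (hpos t ht))
      (ContinuousAt.stronglyMeasurableAtFilter isOpen_Ioi hhc t (hpos t ht)) (hhc t (hpos t ht))
  have hv : ∀ t ∈ Set.uIcc a x, HasDerivAt v (t ^ ρ) t := by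
    intro t ht
    have := ((Real.hasDerivAt_rpow_const (x := t) (p := ρ + 1)
      (Or.inl (hpos t ht).ne')).sub_const (x ^ (ρ + 1))).div_const (ρ + 1)
    simpa [mul_div_assoc, mul_div_cancel_left₀ _ hρ1] using this
  have hu' : IntervalIntegrable h MeasureTheory.volume a x := hhint a x ha (lt_of_lt_of_le ha hax)
  have hv' : IntervalIntegrable (fun t => t ^ ρ) MeasureTheory.volume a x := by
    apply ContinuousOn.intervalIntegrable
    intro t ht
    exact (Real.continuousAt_rpow_const t ρ (Or.inl (hpos t ht).ne')).continuousWithinAt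
  have parts := intervalIntegral.integral_mul_deriv_eq_deriv_mul hu hv hu' hv'
  have hva : v x = 0 := by simp [hvdef]
  have hua : u a = 0 := by simp [hudef]
  -- rewrite LHS with g instead of f
  have hLHS : (∫ τ₁ in a..x, τ₁ ^ ρ * ∫ τ in a..τ₁, τ ^ ρ * f τ)
      = ∫ t in a..x, u t * t ^ ρ := by
    apply intervalIntegral.integral_congr
    intro t ht
    show t ^ ρ * (∫ τ in a..t, τ ^ ρ * f τ) = u t * t ^ ρ
    rw [mul_comm]
    congr 1
    apply intervalIntegral.integral_congr
    intro τ hτ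
    show τ ^ ρ * f τ = τ ^ ρ * g τ
    rw [Set.uIcc_of_le hax] at ht
    rw [Set.uIcc_of_le ht.1] at hτ
    rw [hgeq τ ⟨hτ.1, le_trans hτ.2 (le_trans ht.2 hxb)⟩]
  have hRHS : (∫ τ in a..x, (x ^ (ρ + 1) - τ ^ (ρ + 1)) * τ ^ ρ * f τ)
      = ∫ τ in a..x, (x ^ (ρ + 1) - τ ^ (ρ + 1)) * τ ^ ρ * g τ := by
    apply intervalIntegral.integral_congr
    intro τ hτ
    show (x ^ (ρ + 1) - τ ^ (ρ + 1)) * τ ^ ρ * f τ = (x ^ (ρ + 1) - τ ^ (ρ + 1)) * τ ^ ρ * g τ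
    rw [Set.uIcc_of_le hax] at hτ
    rw [hgeq τ ⟨hτ.1, le_trans hτ.2 hxb⟩]
  rw [hLHS, hRHS, parts, hva, hua]
  simp only [mul_zero, zero_mul, sub_zero, zero_sub]
  rw [← intervalIntegral.integral_const_mul, ← intervalIntegral.integral_neg]
  apply intervalIntegral.integral_congr
  intro t ht
  show -(h t * v t) = 1 / (ρ + 1) * ((x ^ (ρ + 1) - t ^ (ρ + 1)) * t ^ ρ * g t)
  simp only [hhdef, hvdef]
  field_simp
  ring
end
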